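/- The function g : ℝ → ℝ defined by g(x) = ∫₀ˣ χ_K(t) dt, where χ_K is the characteristic function of a fat (positive-measure) Cantor set K ⊆ (0,1), is Lipschitz continuous with constant 1, monotone nondecreasing, and is not semialgebraic (its graph is not a semialgebraic subset of ℝ²). -/

import Mathlib

open Set MeasureTheory

/-- A basic semialgebraic subset of `ℝⁿ`: solutions of one polynomial equality
and finitely many strict polynomial inequalities. -/
def IsBasicSemialgebraic (n : ℕ) (s : Set (Fin n → ℝ)) : Prop :=
  ∃ (p : MvPolynomial (Fin n) ℝ) (Q : Finset (MvPolynomial (Fin n) ℝ)),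
    s = {x | MvPolynomial.eval x p = 0 ∧ ∀ q ∈ Q, 0 < MvPolynomial.eval x q}

/-- A semialgebraic subset of `ℝⁿ`: a finite union of basic semialgebraic sets. -/
def IsSemialgebraic (n : ℕ) (s : Set (Fin n → ℝ)) : Prop :=
  ∃ (k : ℕ) (F : Fin k → Set (Fin n → ℝ)),
    (∀ i, IsBasicSemialgebraic n (F i)) ∧ s = ⋃ i, F i

/-- `x ↦ ∫₀ˣ χ_K(t) dt`. -/
noncomputable def cantorIntegral (K : Set ℝ) (x : ℝ) : ℝ :=
  ∫ t in (0:ℝ)..x, Set.indicator K (fun _ => (1:ℝ)) t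

/-! ### Auxiliary lemmas -/

private lemma aux_intervalIntegrable {K : Set ℝ} (hK : MeasurableSet K) (a b : ℝ) :
    IntervalIntegrable (Set.indicator K fun _ => (1:ℝ)) volume a b := by
  have h1 : IntegrableOn (fun _ : ℝ => (1:ℝ)) (Set.uIcc a b) volume :=
    integrableOn_const measure_Icc_lt_top.ne
  exact (h1.indicator hK).intervalIntegrable

private lemma aux_diff {K : Set ℝ} (hK : MeasurableSet K) {a b : ℝ} (hab : a ≤ b) :
    cantorIntegral K b - cantorIntegral K a = (volume (K ∩ Set.Ioc a b)).toReal := by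
  have h1 := intervalIntegral.integral_add_adjacent_intervals
    (aux_intervalIntegrable hK 0 a) (aux_intervalIntegrable hK a b)
  have h2 : cantorIntegral K b - cantorIntegral K a
      = ∫ t in a..b, Set.indicator K (fun _ => (1:ℝ)) t := by
    unfold cantorIntegral
    linarith [h1]
  rw [h2, intervalIntegral.integral_of_le hab,
    MeasureTheory.integral_indicator_const (1:ℝ) hK, measureReal_restrict_apply hK]
  simp [Measure.real]

private lemma aux_vol_Ioc_ne_top (K : Set ℝ) (a b : ℝ) : volume (K ∩ Set.Ioc a b) ≠ ⊤ :=
  ne_top_of_le_ne_top (by simp [Real.volume_Ioc]) (measure_mono Set.inter_subset_right)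

private lemma aux_mono {K : Set ℝ} (hK : MeasurableSet K) : Monotone (cantorIntegral K) := by
  intro a b hab
  have h := aux_diff hK hab
  have := ENNReal.toReal_nonneg (a := volume (K ∩ Set.Ioc a b))
  linarith

private lemma aux_lip {K : Set ℝ} (hK : MeasurableSet K) : LipschitzWith 1 (cantorIntegral K) := by
  have key : ∀ a b : ℝ, a ≤ b → cantorIntegral K b - cantorIntegral K a ≤ b - a := by
    intro a b hab
    rw [aux_diff hK hab]
    have h1 : volume (K ∩ Set.Ioc a b) ≤ volume (Set.Ioc a b) :=
      measure_mono Set.inter_subset_right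
    have h2 : (volume (K ∩ Set.Ioc a b)).toReal ≤ (volume (Set.Ioc a b)).toReal :=
      ENNReal.toReal_mono (by simp [Real.volume_Ioc]) h1
    rw [Real.volume_Ioc, ENNReal.toReal_ofReal (by linarith)] at h2
    exact h2
  apply LipschitzWith.of_dist_le_mul
  intro a b
  rw [NNReal.coe_one, one_mul, Real.dist_eq, Real.dist_eq]
  rcases le_total a b with h | h
  · rw [abs_of_nonpos (by linarith [aux_mono hK h]), abs_of_nonpos (by linarith)]
    linarith [key a b h]
  · rw [abs_of_nonneg (by linarith [aux_mono hK h]), abs_of_nonneg (by linarith)]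
    linarith [key b a h]

/-- If a nonzero bivariate polynomial vanishes with infinitely many `x` for some `y`,
then only finitely many such `y` exist. -/
private lemma aux_poly_finite {P : MvPolynomial (Fin 2) ℝ} (hP : P ≠ 0) :
    {y : ℝ | {x : ℝ | MvPolynomial.eval ![x, y] P = 0}.Infinite}.Finite := by
  set B := MvPolynomial.finSuccEquiv ℝ 1 P with hBdef
  have hB0 : B ≠ 0 := fun h => hP ((map_eq_zero_iff _ (AlgEquiv.injective _)).mp h)
  have hex : ∃ n, B.coeff n ≠ 0 := by
    by_contra h
    push_neg at h
    exact hB0 (Polynomial.ext fun n => by simp [h n])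
  obtain ⟨k, hk⟩ := hex
  set b := B.coeff k with hbdef
  set s0 : Fin 0 → ℝ := ![] with hs0
  set c := Polynomial.map (MvPolynomial.eval s0) (MvPolynomial.finSuccEquiv ℝ 0 b) with hcdef
  have heval_inj : Function.Injective (MvPolynomial.eval s0) := by
    intro p q h
    obtain ⟨u, rfl⟩ := MvPolynomial.C_surjective (Fin 0) p
    obtain ⟨u', rfl⟩ := MvPolynomial.C_surjective (Fin 0) q
    simpa using h
  have hc0 : c ≠ 0 := by
    intro h
    apply hk
    have h1 : MvPolynomial.finSuccEquiv ℝ 0 b = 0 := by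
      apply Polynomial.map_injective _ heval_inj
      simpa [← hcdef] using h
    exact (map_eq_zero_iff _ (AlgEquiv.injective _)).mp h1
  apply (Polynomial.finite_setOf_isRoot hc0).subset
  intro y hy
  have hmapzero : Polynomial.map (MvPolynomial.eval (![y] : Fin 1 → ℝ)) B = 0 := by
    apply Polynomial.eq_zero_of_infinite_isRoot
    apply hy.mono
    intro x hx
    have h := MvPolynomial.eval_eq_eval_mv_eval' (![y] : Fin 1 → ℝ) x P
    have hcons : (Fin.cons x ![y] : Fin 2 → ℝ) = ![x, y] := by
      funext j; fin_cases j <;> rfl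
    rw [hcons] at h
    simp only [Polynomial.IsRoot, Set.mem_setOf_eq]
    rw [← hBdef] at h
    rw [← h]
    exact hx
  have hbval : MvPolynomial.eval (![y] : Fin 1 → ℝ) b = 0 := by
    have := congrArg (fun q => Polynomial.coeff q k) hmapzero
    simpa [Polynomial.coeff_map, ← hbdef] using this
  have h2 : MvPolynomial.eval (Fin.cons y s0 : Fin 1 → ℝ) b = Polynomial.eval y c := by
    rw [hcdef]
    exact MvPolynomial.eval_eq_eval_mv_eval' s0 y b
  have h3 : (Fin.cons y s0 : Fin 1 → ℝ) = ![y] := by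
    funext j; fin_cases j <;> rfl
  simp only [Set.mem_setOf_eq, Polynomial.IsRoot]
  rw [← h2, h3, hbval]

/-- From a semialgebraic graph one gets a nonzero polynomial vanishing on the graph. -/
private lemma aux_graph_poly (g : ℝ → ℝ)
    (hS : IsSemialgebraic 2 {x : Fin 2 → ℝ | x 1 = g (x 0)}) :
    ∃ P : MvPolynomial (Fin 2) ℝ, P ≠ 0 ∧ ∀ x, MvPolynomial.eval ![x, g x] P = 0 := by
  classical
  obtain ⟨k, F, hF, hU⟩ := hS
  choose p Q hpQ using hF
  have hne : ∀ i, (F i).Nonempty → p i ≠ 0 := by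
    rintro i ⟨v, hv⟩ hp0
    have hvg : v 1 = g (v 0) := by
      have h : v ∈ ⋃ j, F j := Set.mem_iUnion.mpr ⟨i, hv⟩
      rw [← hU] at h
      exact h
    set U : Set ℝ := {t | ∀ q ∈ Q i, 0 < MvPolynomial.eval ![v 0, t] q} with hUdef
    have hUopen : IsOpen U := by
      have hrw : U = ⋂ q ∈ (Q i), {t : ℝ | 0 < MvPolynomial.eval ![v 0, t] q} := by
        ext t; simp [hUdef]
      rw [hrw]
      apply isOpen_biInter_finset
      intro q _
      have hcont : Continuous fun t : ℝ => MvPolynomial.eval ![v 0, t] q := by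
        apply (MvPolynomial.continuous_eval q).comp
        refine continuous_pi fun j => ?_
        fin_cases j
        · simpa using continuous_const
        · simpa using continuous_id'
      exact isOpen_lt continuous_const hcont
    have hveta : (![v 0, v 1] : Fin 2 → ℝ) = v := by
      funext j; fin_cases j <;> rfl
    have hv1U : v 1 ∈ U := by
      intro q hq
      have hvF : v ∈ {x : Fin 2 → ℝ |
          MvPolynomial.eval x (p i) = 0 ∧ ∀ q ∈ Q i, 0 < MvPolynomial.eval x q} := by
        rw [← hpQ i]; exact hv
      rw [hveta]
      exact hvF.2 q hq
    obtain ⟨ε, hε, hball⟩ := Metric.isOpen_iff.mp hUopen _ hv1U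
    have hmem : v 1 + ε / 2 ∈ U := by
      apply hball
      rw [Metric.mem_ball, Real.dist_eq]
      rw [abs_of_nonneg (by linarith)]
      linarith
    have hFi : (![v 0, v 1 + ε / 2] : Fin 2 → ℝ) ∈ F i := by
      rw [hpQ i]
      exact ⟨by simp [hp0], hmem⟩
    have hgr : (![v 0, v 1 + ε / 2] : Fin 2 → ℝ) ∈ ⋃ j, F j := Set.mem_iUnion.mpr ⟨i, hFi⟩
    rw [← hU] at hgr
    simp only [Set.mem_setOf_eq, Matrix.cons_val_one, Matrix.head_cons,
      Matrix.cons_val_zero] at hgr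
    rw [← hvg] at hgr
    linarith
  refine ⟨∏ i, if h : (F i).Nonempty then p i else 1, ?_, ?_⟩
  · apply Finset.prod_ne_zero_iff.mpr
    intro i _
    split
    · exact hne i ‹_›
    · exact one_ne_zero
  · intro x
    have hxg : (![x, g x] : Fin 2 → ℝ) ∈ {v : Fin 2 → ℝ | v 1 = g (v 0)} := by simp
    rw [hU] at hxg
    obtain ⟨i, hi⟩ := Set.mem_iUnion.mp hxg
    rw [map_prod]
    apply Finset.prod_eq_zero (Finset.mem_univ i)
    rw [dif_pos ⟨_, hi⟩]
    have hmem : (![x, g x] : Fin 2 → ℝ) ∈ {v : Fin 2 → ℝ |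
        MvPolynomial.eval v (p i) = 0 ∧ ∀ q ∈ Q i, 0 < MvPolynomial.eval v q} := by
      rw [← hpQ i]; exact hi
    exact hmem.1

theorem cantorIntegral_lipschitz_monotone_not_semialgebraic (K : Set ℝ)
    (hKsub : K ⊆ Set.Ioo 0 1) (hKcl : IsClosed K) (hKint : interior K = ∅)
    (hKpos : 0 < volume K) :
    LipschitzWith 1 (cantorIntegral K) ∧ Monotone (cantorIntegral K) ∧
      ¬ IsSemialgebraic 2 {x : Fin 2 → ℝ | x 1 = cantorIntegral K (x 0)} := by
  have hKm : MeasurableSet K := hKcl.measurableSet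
  set g := cantorIntegral K with hg
  have hgcont : Continuous g := (aux_lip hKm).continuous
  refine ⟨aux_lip hKm, aux_mono hKm, ?_⟩
  intro hS
  obtain ⟨P, hP0, hPv⟩ := aux_graph_poly g hS
  -- The set of "flat values" is finite
  set Fl : Set ℝ := {y : ℝ | (g ⁻¹' {y}).Infinite} with hFl
  have hFlfin : Fl.Finite := by
    apply (aux_poly_finite hP0).subset
    intro y hy
    apply hy.mono
    intro x hx
    have hgx : g x = y := hx
    have := hPv x
    rw [hgx] at this
    exact this
  -- each level set meets K in measure zero
  have hKcomp : IsCompact K :=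
    isCompact_Icc.of_isClosed_subset hKcl (hKsub.trans Set.Ioo_subset_Icc_self)
  have hlevel0 : ∀ y : ℝ, volume (K ∩ g ⁻¹' {y}) = 0 := by
    intro y
    set S := K ∩ g ⁻¹' {y} with hSdef
    rcases S.eq_empty_or_nonempty with h | h
    · simp [h]
    have hScomp : IsCompact S := hKcomp.inter_right (isClosed_singleton.preimage hgcont)
    have ha := hScomp.sInf_mem h
    have hb := hScomp.sSup_mem h
    have hab : sInf S ≤ sSup S := csInf_le_csSup h hScomp.bddBelow hScomp.bddAbove
    have hvol : volume (K ∩ Set.Ioc (sInf S) (sSup S)) = 0 := by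
      have hdiff := aux_diff hKm hab
      have hya : g (sInf S) = y := ha.2
      have hyb : g (sSup S) = y := hb.2
      rw [hg] at hya hyb
      rw [hya, hyb, sub_self] at hdiff
      rcases (ENNReal.toReal_eq_zero_iff _).mp hdiff.symm with h0 | htop
      · exact h0
      · exact absurd htop (aux_vol_Ioc_ne_top K _ _)
    have hsub : S ⊆ {sInf S} ∪ (K ∩ Set.Ioc (sInf S) (sSup S)) := by
      intro x hx
      rcases eq_or_lt_of_le (csInf_le hScomp.bddBelow hx) with heq | hlt
      · exact Or.inl heq.symm
      · exact Or.inr ⟨hx.1, hlt, le_csSup hScomp.bddAbove hx⟩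
    have hle0 : volume S ≤ 0 :=
      calc volume S ≤ volume ({sInf S} ∪ (K ∩ Set.Ioc (sInf S) (sSup S))) := measure_mono hsub
        _ ≤ volume ({sInf S} : Set ℝ) + volume (K ∩ Set.Ioc (sInf S) (sSup S)) :=
            measure_union_le _ _
        _ = 0 := by rw [hvol, Real.volume_singleton, add_zero]
    exact le_antisymm hle0 zero_le
  -- points of (0,1) off K give flat values
  have hflat : ∀ x ∈ Set.Ioo (0:ℝ) 1, x ∉ K → (g ⁻¹' {g x}).Infinite := by
    intro x _ hxK
    obtain ⟨ε, hε, hball⟩ := Metric.isOpen_iff.mp hKcl.isOpen_compl x hxK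
    have hconst : ∀ u ∈ Set.Ioo (x - ε) (x + ε), g u = g x := by
      intro u hu
      have hdisj : ∀ a b : ℝ, x - ε < a → b < x + ε → K ∩ Set.Ioc a b = ∅ := by
        intro a b hxa hbx
        ext t
        simp only [Set.mem_inter_iff, Set.mem_Ioc, Set.mem_empty_iff_false, iff_false]
        rintro ⟨htK, ht1, ht2⟩
        have : t ∈ Metric.ball x ε := by
          rw [Real.ball_eq_Ioo]
          exact ⟨by linarith, by linarith⟩
        exact hball this htK
      rcases le_total u x with h | h
      · have hd := aux_diff hKm h
        rw [hdisj u x hu.1 (by linarith)] at hd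
        simp only [measure_empty, ENNReal.toReal_zero] at hd
        rw [hg]; linarith
      · have hd := aux_diff hKm h
        rw [hdisj x u (by linarith) hu.2] at hd
        simp only [measure_empty, ENNReal.toReal_zero] at hd
        rw [hg]; linarith
    apply (Set.Ioo_infinite (show x - ε < x + ε by linarith)).mono
    intro u hu
    exact hconst u hu
  -- (0,1) is covered by the flat level sets
  have hIooT : Set.Ioo (0:ℝ) 1 ⊆ ⋃ y ∈ hFlfin.toFinset, g ⁻¹' {y} := by
    set T := ⋃ y ∈ hFlfin.toFinset, g ⁻¹' {y} with hT
    have hTclosed : IsClosed T :=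
      isClosed_biUnion_finset fun y _ => isClosed_singleton.preimage hgcont
    have hsubK : Set.Ioo (0:ℝ) 1 \ T ⊆ K := by
      rintro x ⟨hx, hxT⟩
      by_contra hxK
      apply hxT
      have hyFl : g x ∈ Fl := hflat x hx hxK
      exact Set.mem_biUnion (hFlfin.mem_toFinset.mpr hyFl) rfl
    have hopen : IsOpen (Set.Ioo (0:ℝ) 1 \ T) := isOpen_Ioo.sdiff hTclosed
    have hint : Set.Ioo (0:ℝ) 1 \ T ⊆ interior K := interior_maximal hsubK hopen
    rw [hKint] at hint
    intro x hx
    by_contra hxT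
    exact hint ⟨hx, hxT⟩
  -- conclude
  have hKcov : K ⊆ ⋃ y ∈ hFlfin.toFinset, (K ∩ g ⁻¹' {y}) := by
    intro x hx
    obtain ⟨s, hs⟩ := Set.mem_iUnion.mp (hIooT (hKsub hx))
    obtain ⟨hsF, hxs⟩ := Set.mem_iUnion.mp hs
    exact Set.mem_iUnion.mpr ⟨s, Set.mem_iUnion.mpr ⟨hsF, hx, hxs⟩⟩
  have hle : volume K ≤ ∑ y ∈ hFlfin.toFinset, volume (K ∩ g ⁻¹' {y}) :=
    (measure_mono hKcov).trans (measure_biUnion_finset_le _ _)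
  rw [Finset.sum_eq_zero (fun y _ => hlevel0 y)] at hle
  exact absurd hle (by simpa using hKpos.ne')
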